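/- Let φ: G → G be an endomorphism of a group G and N its subgroup of φ-nilpotent elements. Two elements x, y ∈ G are φ-conjugate if and only if xN and yN are [φ/N]-conjugate in G/N. Consequently the projection induces a bijection between φ-conjugacy classes of G and [φ/N]-conjugacy classes of G/N, so R(φ) = R([φ/N]). -/
import Mathlib

private lemma twisted_key {G : Type*} [Group G] (φ : G →* G) :
    ∀ (k : ℕ) (x n : G), (⇑φ)^[k] n = 1 → ∃ g : G, x * n = g * x * (φ g)⁻¹ := by
  intro k
  induction k with
  | zero =>
    intro x n hn
    simp only [Function.iterate_zero, id] at hn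
    exact ⟨1, by simp [hn]⟩
  | succ k ih =>
    intro x n hn
    set m : G := φ (x * n * x⁻¹) with hm
    have hmk : (⇑φ)^[k] m = 1 := by
      have h : (⇑φ)^[k + 1] (x * n * x⁻¹) = 1 := by
        rw [iterate_map_mul, iterate_map_mul, iterate_map_inv, hn]
        group
      rw [hm, ← Function.iterate_succ_apply]
      exact h
    obtain ⟨g', hg'⟩ := ih x m hmk
    refine ⟨(x * n * x⁻¹) * g', ?_⟩
    rw [map_mul, mul_inv_rev,
      show x * n * x⁻¹ * g' * x * ((φ g')⁻¹ * (φ (x * n * x⁻¹))⁻¹) =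
        x * n * x⁻¹ * (g' * x * (φ g')⁻¹) * (φ (x * n * x⁻¹))⁻¹ from by group,
      ← hg', ← hm]
    group

/-- Twisted conjugacy descends to the quotient by the subgroup `N` of φ-nilpotent
elements: `x, y` are φ-conjugate iff `xN, yN` are `[φ/N]`-conjugate, and the projection
induces a bijection between the φ-conjugacy classes of `G` and the `[φ/N]`-conjugacy
classes of `G/N`, so `R(φ) = R([φ/N])`. -/
theorem reidemeister_quotient_nilpotent {G : Type*} [Group G] (φ : G →* G)
    (N : Subgroup G) [N.Normal]
    (hN : (N : Set G) = {x : G | ∃ n : ℕ, (⇑φ)^[n] x = 1})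
    (ψ : G ⧸ N →* G ⧸ N)
    (hψ : ∀ x : G, ψ (QuotientGroup.mk x) = QuotientGroup.mk (φ x)) :
    (∀ x y : G, (∃ g : G, y = g * x * (φ g)⁻¹) ↔
      (∃ g : G ⧸ N, (QuotientGroup.mk y : G ⧸ N) = g * QuotientGroup.mk x * (ψ g)⁻¹)) ∧
    ∃ e : Quot (fun x y : G => ∃ g : G, y = g * x * (φ g)⁻¹) ≃
          Quot (fun x y : G ⧸ N => ∃ g : G ⧸ N, y = g * x * (ψ g)⁻¹),
      ∀ x : G, e (Quot.mk _ x) = Quot.mk _ (QuotientGroup.mk x : G ⧸ N) := by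
  have key := twisted_key φ
  have main : ∀ x y : G, (∃ g : G, y = g * x * (φ g)⁻¹) ↔
      (∃ g : G ⧸ N, (QuotientGroup.mk y : G ⧸ N) = g * QuotientGroup.mk x * (ψ g)⁻¹) := by
    intro x y
    constructor
    · rintro ⟨g, rfl⟩
      exact ⟨QuotientGroup.mk g, by rw [hψ]; simp [QuotientGroup.mk_mul, QuotientGroup.mk_inv]⟩
    · rintro ⟨g, hg⟩
      obtain ⟨g₀, rfl⟩ := QuotientGroup.mk_surjective g
      rw [hψ] at hg
      have hmk : (QuotientGroup.mk y : G ⧸ N) = QuotientGroup.mk (g₀ * x * (φ g₀)⁻¹) := by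
        rw [hg]; simp [QuotientGroup.mk_mul, QuotientGroup.mk_inv]
      have hmem : y⁻¹ * (g₀ * x * (φ g₀)⁻¹) ∈ N := (QuotientGroup.eq).mp hmk
      set z : G := g₀ * x * (φ g₀)⁻¹ with hz
      have hn : z⁻¹ * y ∈ N := by
        have := N.inv_mem hmem
        simpa [mul_assoc] using this
      have hy : y = z * (z⁻¹ * y) := by group
      obtain ⟨k, hk⟩ : ∃ k : ℕ, (⇑φ)^[k] (z⁻¹ * y) = 1 := by
        have : (z⁻¹ * y) ∈ (N : Set G) := hn
        rwa [hN] at this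
      obtain ⟨g', hg'⟩ := key k z (z⁻¹ * y) hk
      refine ⟨g' * g₀, ?_⟩
      rw [hy, hg', hz, map_mul]; group
  refine ⟨main, ?_⟩
  -- forward map
  have h1 : ∀ x y : G, (∃ g : G, y = g * x * (φ g)⁻¹) →
      (∃ g : G ⧸ N, (QuotientGroup.mk y : G ⧸ N) = g * QuotientGroup.mk x * (ψ g)⁻¹) :=
    fun x y h => (main x y).mp h
  let F : Quot (fun x y : G => ∃ g : G, y = g * x * (φ g)⁻¹) →
      Quot (fun x y : G ⧸ N => ∃ g : G ⧸ N, y = g * x * (ψ g)⁻¹) :=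
    Quot.map QuotientGroup.mk (fun x y h => h1 x y h)
  -- inverse map on G ⧸ N
  let f0 : G ⧸ N → Quot (fun x y : G => ∃ g : G, y = g * x * (φ g)⁻¹) :=
    Quotient.lift (Quot.mk _)
      (by
        intro a b hab
        have hab' : a⁻¹ * b ∈ N := (QuotientGroup.leftRel_apply).mp hab
        have : (QuotientGroup.mk b : G ⧸ N) = QuotientGroup.mk a := (QuotientGroup.eq.mpr hab').symm
        have hr : ∃ g : G, b = g * a * (φ g)⁻¹ :=
          (main a b).mpr ⟨1, by simp [this]⟩
        exact Quot.sound hr)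
  let Finv : Quot (fun x y : G ⧸ N => ∃ g : G ⧸ N, y = g * x * (ψ g)⁻¹) →
      Quot (fun x y : G => ∃ g : G, y = g * x * (φ g)⁻¹) :=
    Quot.lift f0
      (by
        intro a b hab
        obtain ⟨x, rfl⟩ := QuotientGroup.mk_surjective a
        obtain ⟨y, rfl⟩ := QuotientGroup.mk_surjective b
        have hr : ∃ g : G, y = g * x * (φ g)⁻¹ := (main x y).mpr hab
        exact Quot.sound hr)
  refine ⟨⟨F, Finv, ?_, ?_⟩, fun x => rfl⟩
  · intro q
    rcases q with ⟨x⟩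
    rfl
  · intro q
    rcases q with ⟨a⟩
    obtain ⟨x, rfl⟩ := QuotientGroup.mk_surjective a
    show F (Quot.mk _ x) = _
    rfl
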